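/- Let R be a ring such that every automorphism of the category C_R of finitely generated free left R-modules is equinumerous (i.e., φ(F) ≅ F for every object F). Then every automorphism of C_R is semi-inner. -/

import Mathlib

open CategoryTheory

/-- The category `C_R`: the full subcategory of the category of left `R`-modules whose
objects are the finitely generated free left `R`-modules. -/
def CR (R : Type) [Ring R] : Type 1 :=
  ObjectProperty.FullSubcategory (fun M : ModuleCat.{0} R => Module.Finite R M ∧ Module.Free R M)

instance (R : Type) [Ring R] : Category (CR R) :=
  ObjectProperty.FullSubcategory.category _

/-- A morphism of `C_R` is just an `R`-linear map. -/
def homToLin {R : Type} [Ring R] {F G : CR R} (f : F ⟶ G) : F.obj →ₗ[R] G.obj := f.hom.hom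

/-- An automorphism `φ` of the category `C_R` is *semi-inner* if there are a ring
automorphism `σ` of `R` and additive isomorphisms `s_F : F ≃+ φ(F)`, one for each object
`F` of `C_R`, with `s_F (r • a) = σ r • s_F a`, such that `φ(f) ∘ s_F = s_G ∘ f` for
every `R`-linear map `f : F ⟶ G`. -/
def SemiInner (R : Type) [Ring R] (φ : Aut (Cat.of (CR R))) : Prop :=
  ∃ (σ : R ≃+* R)
    (s : ∀ F : CR R, F.obj ≃+ ((φ.hom.toFunctor : CR R ⥤ CR R).obj F).obj),
    (∀ (F : CR R) (r : R) (a : F.obj), s F (r • a) = σ r • s F a) ∧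
    (∀ (F G : CR R) (f : F ⟶ G) (a : F.obj),
      homToLin ((φ.hom.toFunctor : CR R ⥤ CR R).map f) (s F a) = s G (homToLin f a))

open CategoryTheory.Limits

namespace Stmt12Aux

variable {R : Type} [Ring R]

noncomputable instance : Preadditive (CR R) :=
  CategoryTheory.Preadditive.fullSubcategory _

/-- Build a morphism of `CR R` from a linear map. -/
def linToHom {F G : CR R} (f : F.obj →ₗ[R] G.obj) : F ⟶ G := ObjectProperty.homMk (ModuleCat.ofHom f)

@[simp] lemma homToLin_linToHom {F G : CR R} (f : F.obj →ₗ[R] G.obj) (a : F.obj) :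
    homToLin (linToHom f) a = f a := rfl

lemma hom_ext {F G : CR R} {f g : F ⟶ G} (h : ∀ a, homToLin f a = homToLin g a) : f = g :=
  ObjectProperty.hom_ext _ (ModuleCat.hom_ext (LinearMap.ext h))

lemma homToLin_comp {F G H : CR R} (f : F ⟶ G) (g : G ⟶ H) (a : F.obj) :
    homToLin (f ≫ g) a = homToLin g (homToLin f a) := rfl

lemma homToLin_add {F G : CR R} (f g : F ⟶ G) (a : F.obj) :
    homToLin (f + g) a = homToLin f a + homToLin g a := rfl

/-- The product object in `CR R`. -/
def prodObj (F G : CR R) : CR R := by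
  haveI := F.property.1; haveI := F.property.2
  haveI := G.property.1; haveI := G.property.2
  exact ⟨ModuleCat.of R (F.obj × G.obj),
    ⟨(inferInstance : Module.Finite R (F.obj × G.obj)),
     (inferInstance : Module.Free R (F.obj × G.obj))⟩⟩

noncomputable instance : HasBinaryBiproducts (CR R) where
  has_binary_biproduct F G := HasBinaryBiproduct.mk
    { bicone :=
        { pt := prodObj F G
          fst := linToHom (LinearMap.fst R F.obj G.obj)
          snd := linToHom (LinearMap.snd R F.obj G.obj)
          inl := linToHom (LinearMap.inl R F.obj G.obj)
          inr := linToHom (LinearMap.inr R F.obj G.obj)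
          inl_fst := hom_ext fun a => rfl
          inl_snd := hom_ext fun a => rfl
          inr_fst := hom_ext fun a => rfl
          inr_snd := hom_ext fun a => rfl }
      isBilimit := isBinaryBilimitOfTotal _ (hom_ext fun a => by
        rcases a with ⟨x, y⟩
        show ((x, 0) : F.obj × G.obj) + ((0, y) : F.obj × G.obj) = (x, y)
        simp) }

/-- The rank one free module, as an object of `CR R`. -/
def unitObj (R : Type) [Ring R] : CR R := by
  exact ⟨ModuleCat.of R R,
    ⟨(inferInstance : Module.Finite R R), (inferInstance : Module.Free R R)⟩⟩

/-- `1 : R` as an element of the unit object. -/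
def one1 (R : Type) [Ring R] : (unitObj R).obj := (1 : R)

/-- The identity map `R → (unitObj R).obj`. -/
def ofR (r : R) : (unitObj R).obj := r

/-- The identity map `(unitObj R).obj → R`. -/
def toR (x : (unitObj R).obj) : R := x

lemma smul_one1 (r : R) : r • one1 R = ofR r := mul_one r

lemma one1_smul (x : (unitObj R).obj) : toR x • one1 R = x := mul_one (toR x)

/-- The morphism `unitObj R ⟶ F` sending `1` to `a`. -/
def fA {F : CR R} (a : F.obj) : unitObj R ⟶ F :=
  linToHom (LinearMap.toSpanSingleton R F.obj a)

@[simp] lemma fA_apply {F : CR R} (a : F.obj) (x : (unitObj R).obj) :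
    homToLin (fA a) x = toR x • a := rfl

lemma fA_one {F : CR R} (a : F.obj) : homToLin (fA a) (one1 R) = a := one_smul R a

lemma fA_eq {F : CR R} (g : unitObj R ⟶ F) : fA (homToLin g (one1 R)) = g :=
  hom_ext fun x => by
    rw [fA_apply, ← map_smul (homToLin g), one1_smul]

lemma fA_comp {F G : CR R} (f : F ⟶ G) (a : F.obj) :
    fA a ≫ f = fA (homToLin f a) :=
  hom_ext fun x => map_smul (homToLin f) (toR x) a

lemma fA_smul {F : CR R} (r : R) (a : F.obj) :
    fA (r • a) = fA (ofR r) ≫ fA a :=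
  hom_ext fun x => by
    show toR x • (r • a) = (toR x * r) • a
    rw [mul_smul]

section Main

variable (Φ : CR R ⥤ CR R) [Φ.Full] [Φ.Faithful] [Φ.Additive]
  (e : Φ.obj (unitObj R) ≅ unitObj R)

/-- The distinguished element of `Φ(R)`. -/
def uu : (Φ.obj (unitObj R)).obj := homToLin e.inv (one1 R)

/-- The underlying function of the semilinear isomorphism `F ≃ Φ(F)`. -/
def sFun (F : CR R) (a : F.obj) : (Φ.obj F).obj :=
  homToLin (Φ.map (fA a)) (uu Φ e)

lemma e_hom_inv (x : (Φ.obj (unitObj R)).obj) :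
    homToLin e.inv (homToLin e.hom x) = x :=
  congrArg (fun f => homToLin f x) e.hom_inv_id

lemma e_inv_hom (x : (unitObj R).obj) :
    homToLin e.hom (homToLin e.inv x) = x :=
  congrArg (fun f => homToLin f x) e.inv_hom_id

lemma sFun_eq (F : CR R) (a : F.obj) :
    sFun Φ e F a = homToLin (e.inv ≫ Φ.map (fA a)) (one1 R) := rfl

lemma s_nat {F G : CR R} (f : F ⟶ G) (a : F.obj) :
    homToLin (Φ.map f) (sFun Φ e F a) = sFun Φ e G (homToLin f a) := by
  have h : Φ.map (fA a) ≫ Φ.map f = Φ.map (fA (homToLin f a)) := by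
    rw [← Φ.map_comp, fA_comp]
  calc homToLin (Φ.map f) (sFun Φ e F a)
      = homToLin (Φ.map (fA a) ≫ Φ.map f) (uu Φ e) := rfl
    _ = homToLin (Φ.map (fA (homToLin f a))) (uu Φ e) := by rw [h]
    _ = sFun Φ e G (homToLin f a) := rfl

/-- The semilinear additive isomorphism `F ≃+ Φ(F)`. -/
noncomputable def sEquiv (F : CR R) : F.obj ≃+ (Φ.obj F).obj where
  toFun := sFun Φ e F
  invFun b := homToLin (Φ.preimage (e.hom ≫ fA b)) (one1 R)
  left_inv a := by
    have h1 : fA (sFun Φ e F a) = e.inv ≫ Φ.map (fA a) :=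
      fA_eq (e.inv ≫ Φ.map (fA a))
    have h2 : e.hom ≫ fA (sFun Φ e F a) = Φ.map (fA a) := by
      rw [h1, e.hom_inv_id_assoc]
    have h3 : Φ.preimage (e.hom ≫ fA (sFun Φ e F a)) = fA a := by
      apply Φ.map_injective
      rw [Φ.map_preimage, h2]
    show homToLin (Φ.preimage (e.hom ≫ fA (sFun Φ e F a))) (one1 R) = a
    rw [h3]
    exact fA_one a
  right_inv b := by
    have h2 : fA (homToLin (Φ.preimage (e.hom ≫ fA b)) (one1 R))
        = Φ.preimage (e.hom ≫ fA b) := fA_eq _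
    show homToLin (Φ.map (fA (homToLin (Φ.preimage (e.hom ≫ fA b)) (one1 R)))) (uu Φ e) = b
    rw [h2, Φ.map_preimage]
    show homToLin (fA b) (homToLin e.hom (homToLin e.inv (one1 R))) = b
    rw [e_inv_hom]
    exact fA_one b
  map_add' a b := by
    have h : fA (a + b) = fA a + fA b := hom_ext fun x => smul_add (toR x) a b
    show homToLin (Φ.map (fA (a + b))) (uu Φ e) = _
    rw [h, Φ.map_add]
    rfl

/-- The underlying function of the ring automorphism `σ`. -/
noncomputable def sigmaFun (r : R) : R := homToLin e.hom (sFun Φ e (unitObj R) r)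

lemma s_smul (F : CR R) (r : R) (a : F.obj) :
    sFun Φ e F (r • a) = sigmaFun Φ e r • sFun Φ e F a := by
  have h1 : sFun Φ e F (r • a)
      = homToLin (Φ.map (fA a)) (sFun Φ e (unitObj R) (ofR r)) := by
    show homToLin (Φ.map (fA (r • a))) (uu Φ e) = _
    rw [fA_smul, Φ.map_comp]
    rfl
  have h2 : sFun Φ e (unitObj R) (ofR r)
      = sigmaFun Φ e r • uu Φ e := by
    have h3 : sFun Φ e (unitObj R) (ofR r)
        = homToLin e.inv (ofR (sigmaFun Φ e r)) := (e_hom_inv Φ e _).symm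
    have h4 : ofR (sigmaFun Φ e r) = sigmaFun Φ e r • one1 R :=
      (smul_one1 _).symm
    rw [h3, h4, map_smul (homToLin e.inv)]
    rfl
  rw [h1, h2, map_smul (homToLin (Φ.map (fA a)))]
  rfl

lemma sigma_mul (r s : R) :
    sigmaFun Φ e (r * s) = sigmaFun Φ e r * sigmaFun Φ e s := by
  have h : sFun Φ e (unitObj R) (ofR (r * s))
      = sigmaFun Φ e r • sFun Φ e (unitObj R) (ofR s) :=
    s_smul Φ e (unitObj R) r (ofR s)
  show homToLin e.hom (sFun Φ e (unitObj R) (ofR (r * s))) = _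
  rw [h, map_smul (homToLin e.hom)]
  rfl

/-- The additive isomorphism underlying `e`. -/
def eAdd : (Φ.obj (unitObj R)).obj ≃+ R where
  toFun x := homToLin e.hom x
  invFun r := homToLin e.inv (ofR r)
  left_inv x := e_hom_inv Φ e x
  right_inv r := e_inv_hom Φ e r
  map_add' x y := map_add (homToLin e.hom) x y

/-- The ring automorphism `σ`. -/
noncomputable def sigma : R ≃+* R :=
  { ((sEquiv Φ e (unitObj R)).trans (eAdd Φ e) :
      R ≃+ R) with
    map_mul' := sigma_mul Φ e }

lemma sigma_apply (r : R) : sigma Φ e r = sigmaFun Φ e r := rfl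

end Main

end Stmt12Aux

/-- if every automorphism of the category `C_R` of finitely generated free
left `R`-modules is equinumerous (`φ(F) ≅ F` for every object `F`), then every
automorphism of `C_R` is semi-inner. -/
theorem stmt12 (R : Type) [Ring R]
    (hEqn : ∀ (φ : Aut (Cat.of (CR R))) (F : CR R),
      Nonempty ((φ.hom.toFunctor : CR R ⥤ CR R).obj F ≅ F))
    (φ : Aut (Cat.of (CR R))) :
    SemiInner R φ := by
  classical
  let Φ : CR R ⥤ CR R := φ.hom.toFunctor
  let Ψ : CR R ⥤ CR R := φ.inv.toFunctor
  let E : CR R ≌ CR R :=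
    CategoryTheory.Equivalence.mk Φ Ψ
      (eqToIso (by exact congrArg Cat.Hom.toFunctor φ.hom_inv_id.symm)) (eqToIso (by exact congrArg Cat.Hom.toFunctor φ.inv_hom_id))
  haveI : Φ.IsEquivalence := E.isEquivalence_functor
  haveI : Φ.Additive := Functor.additive_of_preserves_binary_products Φ
  obtain ⟨e⟩ := hEqn φ (Stmt12Aux.unitObj R)
  exact ⟨Stmt12Aux.sigma Φ e, fun F => Stmt12Aux.sEquiv Φ e F,
    fun F r a => Stmt12Aux.s_smul Φ e F r a,
    fun F G f a => Stmt12Aux.s_nat Φ e f a⟩
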